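/- Let g : ℂ → ℂ be holomorphic near a fixed point x with g(x) = x and multiplier λ = g'(x) satisfying |λ| > 1 (repelling fixed point), and suppose g extends to an entire function (e.g. a polynomial). Then there exists an entire function φ : ℂ → ℂ with φ(0) = x, φ'(0) = 1, and g(φ(ζ)) = φ(λζ) for all ζ ∈ ℂ; moreover φ is given by the locally uniform limit φ(ζ) = lim_{j→∞} g^j(x + λ^{-j}ζ). -/

import Mathlib

open Filter Metric Set

private lemma entire_deriv_continuous (g : ℂ → ℂ) (hg : Differentiable ℂ g) :
    Continuous (deriv g) := by
  have h : AnalyticOnNhd ℂ g Set.univ := fun z _ => hg.analyticAt z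
  exact continuous_iff_continuousAt.2 fun z => (h.deriv z (mem_univ z)).continuousAt

private lemma koenigs_quad (g : ℂ → ℂ) (hg : Differentiable ℂ g) (x : ℂ) :
    ∃ C : ℝ, 0 ≤ C ∧ ∀ w : ℂ, ‖w‖ ≤ 1 →
      ‖g (x + w) - g x - deriv g x * w‖ ≤ C * (‖w‖) ^ 2 := by
  set h := dslope (dslope g x) x with hh
  have hid : ∀ z : ℂ, g z - g x - deriv g x * (z - x) = (z - x) ^ 2 * h z := by
    intro z
    rcases eq_or_ne z x with rfl | hz
    · simp
    · have hzx : z - x ≠ 0 := sub_ne_zero.mpr hz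
      rw [hh, dslope_of_ne _ hz, slope_def_field, dslope_of_ne _ hz, slope_def_field,
        dslope_same]
      field_simp
  have hcont : ContinuousOn h (closedBall x 1) := by
    intro z _
    rcases eq_or_ne z x with rfl | hz'
    · obtain ⟨p, hp⟩ := hg.analyticAt z
      exact
        (hp.has_fpower_series_dslope_fslope.has_fpower_series_dslope_fslope).continuousAt.continuousWithinAt
    · have hev : (fun w => (g w - g x - deriv g x * (w - x)) / (w - x) ^ 2) =ᶠ[nhds z] h := by
        filter_upwards [eventually_ne_nhds hz'] with w hw
        have hne : (w - x) ^ 2 ≠ 0 := pow_ne_zero _ (sub_ne_zero.mpr hw)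
        rw [hid w, mul_div_cancel_left₀ _ hne]
      have hca : ContinuousAt (fun w => (g w - g x - deriv g x * (w - x)) / (w - x) ^ 2) z := by
        have h1 : ContinuousAt (fun w => g w - g x - deriv g x * (w - x)) z :=
          ContinuousAt.sub (ContinuousAt.sub hg.continuous.continuousAt continuousAt_const)
            (continuousAt_const.mul ((continuous_id.sub continuous_const).continuousAt))
        have h2 : ContinuousAt (fun w : ℂ => (w - x) ^ 2) z := by fun_prop
        exact h1.div h2 (pow_ne_zero _ (sub_ne_zero.mpr hz'))
      exact (hca.congr hev).continuousWithinAt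
  obtain ⟨C, hC⟩ := (isCompact_closedBall x 1).exists_bound_of_continuousOn hcont
  refine ⟨max C 0, le_max_right _ _, fun w hw => ?_⟩
  have hz : x + w ∈ closedBall x 1 := by
    simp only [mem_closedBall, Complex.dist_eq, add_sub_cancel_left]
    exact hw
  have h1 := hid (x + w)
  rw [add_sub_cancel_left] at h1
  rw [h1, norm_mul, norm_pow]
  have h2 : ‖h (x + w)‖ ≤ max C 0 :=
    le_trans (by simpa using hC (x + w) hz) (le_max_left _ _)
  have h3 : (0:ℝ) ≤ ‖w‖ ^ 2 := by positivity
  calc ‖w‖ ^ 2 * ‖h (x + w)‖ ≤ ‖w‖ ^ 2 * max C 0 :=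
        mul_le_mul_of_nonneg_left h2 h3
    _ = max C 0 * ‖w‖ ^ 2 := mul_comm _ _

private lemma koenigs_arith_small {a ρ u b Q P : ℝ} (hρ0 : 0 < ρ)
    (ha1 : a ≤ 1) (hu0 : 0 ≤ u) (hP0 : 0 < P) (hQ0 : 0 < Q)
    (hPQ' : P ≤ Q) (huQ : u * Q ≤ ρ) (hQb : Q * b ≤ P * u * (Q + a * P)) :
    b ≤ 2 * ρ := by
  have hPu : P * u ≤ ρ := by nlinarith [mul_le_mul_of_nonneg_right hPQ' hu0]
  have h2 : P * u * (Q + a * P) ≤ 2 * ρ * Q := by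
    nlinarith [mul_le_mul_of_nonneg_left huQ hP0.le,
      mul_le_mul_of_nonneg_left hPQ' (mul_nonneg hP0.le hu0),
      mul_le_mul_of_nonneg_left hPu hQ0.le,
      mul_nonneg (mul_nonneg (sub_nonneg.2 ha1) (mul_nonneg hP0.le hP0.le)) hu0,
      mul_le_mul_of_nonneg_right hPQ' hρ0.le]
  nlinarith

private lemma koenigs_arith_step {L a C ρ u b Q P G : ℝ} (hL1 : 1 < L) (hC0 : 0 ≤ C)
    (hρ0 : 0 < ρ) (ha1 : a ≤ 1) (haL : a * (L * (L - 1)) = 4 * C * ρ)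
    (hu0 : 0 ≤ u) (hb0 : 0 ≤ b) (hP0 : 0 < P) (hQ0 : 0 < Q)
    (hPQ' : P ≤ Q) (huQ : u * Q ≤ ρ)
    (hQb : Q * b ≤ P * u * (Q + a * P)) (hG : G ≤ L * b + C * b ^ 2) :
    Q * G ≤ P * L * u * (Q + a * (P * L)) := by
  have hPu : P * u ≤ ρ := by nlinarith [mul_le_mul_of_nonneg_right hPQ' hu0]
  have hQb2 : Q * b ≤ 2 * ρ * P := by
    nlinarith [mul_le_mul_of_nonneg_left huQ hP0.le,
      mul_le_mul_of_nonneg_left hPu hP0.le,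
      mul_nonneg (mul_nonneg (sub_nonneg.2 ha1) (mul_nonneg hP0.le hP0.le)) hu0]
  have key : Q * (Q * (L * b + C * b ^ 2)) ≤ Q * (P * L * u * (Q + a * (P * L))) := by
    have h1 : (Q * b) * (Q * b) ≤ (2 * ρ * P) * (P * u * (Q + a * P)) :=
      mul_le_mul hQb2 hQb (by positivity) (by positivity)
    have haPQ : a * P ≤ Q := le_trans (by nlinarith) hPQ'
    have h3 : a * (P * P * P) ≤ P * P * Q := by nlinarith
    have h4 : a * (L * (L - 1)) * (P * P * u * Q) = 4 * C * ρ * (P * P * u * Q) := by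
      rw [haL]
    nlinarith [mul_le_mul_of_nonneg_left hQb (by positivity : (0:ℝ) ≤ L * Q),
      mul_le_mul_of_nonneg_left h1 hC0,
      mul_le_mul_of_nonneg_left h3 (by positivity : (0:ℝ) ≤ 2 * C * ρ * u),
      mul_pos hP0 hQ0, hu0, hC0, hρ0.le]
  have h5 : Q * G ≤ Q * (L * b + C * b ^ 2) := mul_le_mul_of_nonneg_left hG hQ0.le
  have h6 : Q * (L * b + C * b ^ 2) ≤ P * L * u * (Q + a * (P * L)) :=
    le_of_mul_le_mul_left key hQ0
  linarith


set_option maxHeartbeats 1600000 in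
theorem stmt14 (g : ℂ → ℂ) (hg : Differentiable ℂ g) (x : ℂ) (hfix : g x = x)
    (hrep : 1 < ‖deriv g x‖) :
    ∃ φ : ℂ → ℂ, Differentiable ℂ φ ∧ φ 0 = x ∧ HasDerivAt φ 1 0 ∧
      (∀ ζ : ℂ, g (φ ζ) = φ (deriv g x * ζ)) ∧
      TendstoLocallyUniformly
        (fun (j : ℕ) (ζ : ℂ) => g^[j] (x + (deriv g x) ^ (-(j : ℤ)) * ζ))
        φ atTop := by
  classical
  set lam : ℂ := deriv g x with hlam
  set L : ℝ := ‖lam‖ with hLdef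
  have hL1 : 1 < L := hrep
  have hL0 : (0:ℝ) < L := lt_trans one_pos hL1
  have hLne : L ≠ 0 := ne_of_gt hL0
  have hlamne : lam ≠ 0 := by
    intro h
    rw [hLdef, h] at hL1
    simp at hL1
    linarith
  obtain ⟨C, hC0, hquad⟩ := koenigs_quad g hg x
  rw [hfix] at hquad
  rw [← hlam] at hquad
  set M : ℝ := (L + L^2)/2 with hMdef
  have hLM : L < M := by rw [hMdef]; nlinarith
  have hML2 : M < L^2 := by rw [hMdef]; nlinarith
  have hM0 : (0:ℝ) < M := by linarith
  -- radius r1 on which |deriv g| ≤ M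
  have hcd : Continuous fun z => ‖deriv g z‖ :=
    continuous_norm.comp (entire_deriv_continuous g hg)
  have hLM' : ‖deriv g x‖ < M := by rw [← hlam, ← hLdef]; exact hLM
  have hev : ∀ᶠ z in nhds x, ‖deriv g z‖ < M :=
    (hcd.tendsto x).eventually_lt_const hLM'
  obtain ⟨δ, hδ0, hδ⟩ := Metric.eventually_nhds_iff.mp hev
  set r1 : ℝ := min (δ/2) 1 with hr1def
  have hr10 : 0 < r1 := lt_min (by linarith) one_pos
  have hr11 : r1 ≤ 1 := min_le_right _ _
  have hMb : ∀ z ∈ closedBall x r1, ‖deriv g z‖ ≤ M := by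
    intro z hz
    rw [mem_closedBall] at hz
    have h1 : dist z x < δ := lt_of_le_of_lt (hz.trans (min_le_left _ _)) (by linarith)
    exact le_of_lt (hδ h1)
  -- the small radius ρ and the constant a
  set ρ : ℝ := min (r1/2) (L*(L-1)/(4*C+1)) with hρdef
  have hLL1 : (0:ℝ) < L*(L-1) := by nlinarith
  have hρ0 : 0 < ρ := lt_min (by linarith) (div_pos hLL1 (by linarith))
  have hρr1 : 2*ρ ≤ r1 := by
    have h1 := min_le_left (r1/2) (L*(L-1)/(4*C+1)); rw [← hρdef] at h1; linarith
  have hρ1 : ρ ≤ 1 := by linarith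
  set a : ℝ := 4*C*ρ/(L*(L-1)) with hadef
  have ha0 : 0 ≤ a := div_nonneg (by positivity) hLL1.le
  have haL : a * (L*(L-1)) = 4*C*ρ := div_mul_cancel₀ _ (ne_of_gt hLL1)
  have ha1 : a ≤ 1 := by
    rw [hadef, div_le_one hLL1]
    have h1 : ρ ≤ L*(L-1)/(4*C+1) := min_le_right _ _
    have h2 : ρ * (4*C+1) ≤ L*(L-1) := by
      rw [← le_div_iff₀ (by linarith : (0:ℝ) < 4*C+1)]; exact h1
    nlinarith
  clear_value lam L M r1 ρ a
  -- the orbit lemma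
  have horb : ∀ j k : ℕ, k ≤ j → ∀ w : ℂ, ‖w‖ * L^j ≤ ρ →
      L^j * ‖g^[k] (x+w) - x‖ ≤ L^k * ‖w‖ * (L^j + a * L^k) := by
    intro j k
    induction k with
    | zero =>
      intro _ w hw
      simp only [Function.iterate_zero, id_eq, add_sub_cancel_left, pow_zero]
      have hu0 := norm_nonneg w
      nlinarith [pow_pos hL0 j, mul_nonneg ha0 hu0]
    | succ k ih =>
      intro hk w hw
      have hkj : k ≤ j := le_trans (Nat.le_succ k) hk
      have hIH := ih hkj w hw
      have hP0 : (0:ℝ) < L^k := pow_pos hL0 k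
      have hQ0 : (0:ℝ) < L^j := pow_pos hL0 j
      have hPQ : L^k * L ≤ L^j := by
        rw [← pow_succ]
        exact pow_le_pow_right₀ hL1.le hk
      have hPQ' : L^k ≤ L^j := pow_le_pow_right₀ hL1.le hkj
      have hu0 : (0:ℝ) ≤ ‖w‖ := norm_nonneg w
      have hb0 : (0:ℝ) ≤ ‖g^[k] (x+w) - x‖ := norm_nonneg _
      have hb2ρ : ‖g^[k] (x+w) - x‖ ≤ 2*ρ :=
        koenigs_arith_small hρ0 ha1 hu0 hP0 hQ0 hPQ' hw hIH
      have hb1 : ‖g^[k] (x+w) - x‖ ≤ 1 := by linarith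
      have hq := hquad (g^[k] (x+w) - x) hb1
      have hxz : x + (g^[k] (x+w) - x) = g^[k] (x+w) := by ring
      rw [hxz] at hq
      have hgz : ‖g (g^[k] (x+w)) - x‖ ≤
          L * ‖g^[k] (x+w) - x‖ + C * (‖g^[k] (x+w) - x‖)^2 := by
        have hsplit : g (g^[k] (x+w)) - x =
            (g (g^[k] (x+w)) - x - lam*(g^[k] (x+w) - x)) + lam*(g^[k] (x+w) - x) := by ring
        have htr := norm_add_le
          (g (g^[k] (x+w)) - x - lam*(g^[k] (x+w) - x)) (lam*(g^[k] (x+w) - x))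
        rw [← hsplit, norm_mul, ← hLdef] at htr
        linarith
      have hit : g^[k+1] (x+w) = g (g^[k] (x+w)) := Function.iterate_succ_apply' g k (x+w)
      rw [hit, pow_succ]
      exact koenigs_arith_step hL1 hC0 hρ0 ha1 haL hu0 hb0 hP0 hQ0 hPQ' hw hIH hgz
  -- corollary: orbit stays in the ball of radius 2ρ
  have horb2 : ∀ j k : ℕ, k ≤ j → ∀ w : ℂ, ‖w‖ * L^j ≤ ρ →
      ‖g^[k] (x+w) - x‖ ≤ 2*ρ := by
    intro j k hk w hw
    exact koenigs_arith_small hρ0 ha1 (norm_nonneg w)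
      (pow_pos hL0 k) (pow_pos hL0 j) (pow_le_pow_right₀ hL1.le hk) hw (horb j k hk w hw)
  -- Lipschitz bound for g on the ball of radius r1
  have hlip : ∀ p q : ℂ, p ∈ closedBall x r1 → q ∈ closedBall x r1 →
      ‖g p - g q‖ ≤ M * ‖p - q‖ := by
    intro p q hp hq
    have h := (convex_closedBall x r1).norm_image_sub_le_of_norm_deriv_le
      (fun z _ => hg.differentiableAt) hMb hq hp
    simpa using h
  -- the approximating sequence
  set F : ℕ → ℂ → ℂ := fun (j : ℕ) (ζ : ℂ) => g^[j] (x + lam ^ (-(j : ℤ)) * ζ) with hFdef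
  have hz1 : ∀ n : ℕ, ‖lam ^ (-(n:ℤ))‖ = (L^n)⁻¹ := by
    intro n
    rw [norm_zpow, ← hLdef, zpow_neg, zpow_natCast]
  set qq : ℝ := M/L^2 with hqdef
  have hq0 : 0 ≤ qq := by positivity
  have hq1 : qq < 1 := (div_lt_one (by positivity)).2 hML2
  set D0 : ℝ := C*ρ^2/L^2 with hD0def
  have hD00 : 0 ≤ D0 := by positivity
  clear_value F qq D0
  -- consecutive difference estimate on the small disc
  have hsmall : ∀ (j : ℕ) (ζ : ℂ), ‖ζ‖ ≤ ρ →
      dist (F (j+1) ζ) (F j ζ) ≤ D0 * qq^j := by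
    intro j ζ hζ
    set u : ℂ := lam ^ (-((j+1:ℕ):ℤ)) * ζ with hudef
    have hLj1 : (0:ℝ) < L^(j+1) := pow_pos hL0 (j+1)
    have habsu : ‖u‖ * L^(j+1) ≤ ρ := by
      rw [hudef, norm_mul, hz1 (j+1)]
      calc (L^(j+1))⁻¹ * ‖ζ‖ * L^(j+1) = ‖ζ‖ := by field_simp
        _ ≤ ρ := hζ
    have habslamu : ‖lam * u‖ * L^j ≤ ρ := by
      rw [norm_mul, hudef, norm_mul, hz1 (j+1), ← hLdef]
      calc L * ((L^(j+1))⁻¹ * ‖ζ‖) * L^j = ‖ζ‖ := by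
            rw [pow_succ]; field_simp
        _ ≤ ρ := hζ
    have e1 : lam * lam ^ (-((j+1:ℕ):ℤ)) = lam ^ (-(j:ℤ)) := by
      have e0 : (-(((j+1):ℕ):ℤ)) = -(j:ℤ) - 1 := by push_cast; ring
      rw [e0, zpow_sub₀ hlamne, zpow_one]
      field_simp
    have hid1 : x + lam ^ (-(j:ℤ)) * ζ = x + lam * u := by
      rw [hudef, ← mul_assoc, e1]
    have hu1 : ‖u‖ ≤ ρ := by
      have h1L : (1:ℝ) ≤ L^(j+1) := by
        calc (1:ℝ) = L^0 := (pow_zero L).symm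
          _ ≤ L^(j+1) := pow_le_pow_right₀ hL1.le (Nat.zero_le _)
      nlinarith [norm_nonneg u]
    have hd0 : ‖(x + lam*u) - g (x+u)‖ ≤ C * (‖u‖)^2 := by
      have h1 := hquad u (le_trans hu1 hρ1)
      have hrev : (x + lam*u) - g (x+u) = -(g (x+u) - x - lam*u) := by ring
      rw [hrev, norm_neg]
      exact h1
    have hchain : ∀ k : ℕ, k ≤ j →
        ‖g^[k] (x + lam*u) - g^[k+1] (x + u)‖ ≤
          M^k * ‖(x + lam*u) - g (x+u)‖ := by
      intro k
      induction k with
      | zero => intro _; simp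
      | succ k ih =>
        intro hk
        have hk' : k ≤ j := by omega
        have hp : ‖g^[k] (x+lam*u) - x‖ ≤ 2*ρ := horb2 j k hk' _ habslamu
        have hq' : ‖g^[k+1] (x+u) - x‖ ≤ 2*ρ := horb2 (j+1) (k+1) (by omega) _ habsu
        rw [Function.iterate_succ_apply' g k, Function.iterate_succ_apply' g (k+1)]
        calc ‖g (g^[k] (x+lam*u)) - g (g^[k+1] (x+u))‖
            ≤ M * ‖g^[k] (x+lam*u) - g^[k+1] (x+u)‖ := by
              apply hlip
              · rw [mem_closedBall, Complex.dist_eq]; linarith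
              · rw [mem_closedBall, Complex.dist_eq]; linarith
          _ ≤ M * (M^k * ‖(x + lam*u) - g (x+u)‖) :=
              mul_le_mul_of_nonneg_left (ih hk') hM0.le
          _ = M^(k+1) * ‖(x + lam*u) - g (x+u)‖ := by ring
    have hFj1 : F (j+1) ζ = g^[j+1] (x+u) := by rw [hFdef, hudef]
    have hFj : F j ζ = g^[j] (x + lam*u) := by
      rw [hFdef]
      dsimp only
      rw [hid1]
    rw [hFj1, hFj, Complex.dist_eq]
    calc ‖g^[j+1] (x+u) - g^[j] (x+lam*u)‖
        = ‖g^[j] (x+lam*u) - g^[j+1] (x+u)‖ := norm_sub_rev _ _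
      _ ≤ M^j * ‖(x + lam*u) - g (x+u)‖ := hchain j le_rfl
      _ ≤ M^j * (C * (‖u‖)^2) :=
          mul_le_mul_of_nonneg_left hd0 (pow_nonneg hM0.le j)
      _ ≤ M^j * (C * (ρ/L^(j+1))^2) := by
          have h2 : ‖u‖ ≤ ρ/L^(j+1) := by
            rw [le_div_iff₀ hLj1]; exact habsu
          have h3 := pow_le_pow_left₀ (norm_nonneg u) h2 2
          exact mul_le_mul_of_nonneg_left (mul_le_mul_of_nonneg_left h3 hC0)
            (pow_nonneg hM0.le j)
      _ = D0 * qq^j := by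
          have hpow : (L^(j+1))^2 = L^2 * (L^2)^j := by
            rw [← pow_mul, ← pow_mul, ← pow_add]
            congr 1
            ring
          rw [hqdef, hD0def, div_pow, hpow, div_pow]
          field_simp
  -- the shift identity
  have hshift : ∀ (m j : ℕ) (ζ : ℂ), F (j+m) ζ = g^[m] (F j (lam ^ (-(m:ℤ)) * ζ)) := by
    intro m j ζ
    rw [hFdef]
    dsimp only
    rw [← Function.iterate_add_apply]
    have e0 : (-(((j+m):ℕ):ℤ)) = (-(j:ℤ)) + (-(m:ℤ)) := by push_cast; ring
    rw [e0, zpow_add₀ hlamne, mul_assoc, add_comm j m]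
  have hFmem : ∀ (j : ℕ) (ζ : ℂ), ‖ζ‖ ≤ ρ → ‖F j ζ - x‖ ≤ 2*ρ := by
    intro j ζ hζ
    rw [hFdef]
    dsimp only
    apply horb2 j j le_rfl
    rw [norm_mul, hz1 j]
    have hp : (0:ℝ) < L^j := pow_pos hL0 j
    calc (L^j)⁻¹ * ‖ζ‖ * L^j = ‖ζ‖ := by field_simp
      _ ≤ ρ := hζ
  -- Lipschitz constants for the iterates on the ball of radius 2ρ
  have hlipm : ∀ m : ℕ, ∃ Am : ℝ, 0 ≤ Am ∧ ∀ p q : ℂ, ‖p - x‖ ≤ 2*ρ →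
      ‖q - x‖ ≤ 2*ρ → ‖g^[m] p - g^[m] q‖ ≤ Am * ‖p - q‖ := by
    intro m
    have hgm : Differentiable ℂ (g^[m]) := hg.iterate m
    obtain ⟨Am, hAm⟩ := (isCompact_closedBall x (2*ρ)).exists_bound_of_continuousOn
      ((entire_deriv_continuous _ hgm).continuousOn)
    refine ⟨max Am 0, le_max_right _ _, fun p q hp hq => ?_⟩
    have hqmem : q ∈ closedBall x (2*ρ) := by rw [mem_closedBall, Complex.dist_eq]; exact hq
    have hpmem : p ∈ closedBall x (2*ρ) := by rw [mem_closedBall, Complex.dist_eq]; exact hp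
    have h := (convex_closedBall x (2*ρ)).norm_image_sub_le_of_norm_deriv_le
      (f := g^[m]) (C := max Am 0)
      (fun z _ => hgm.differentiableAt) (fun z hz => le_trans (hAm z hz) (le_max_left _ _))
      hqmem hpmem
    simpa using h
  -- consecutive difference estimate on big discs
  have hbig : ∀ m : ℕ, ∃ Dm : ℝ, 0 ≤ Dm ∧ ∀ (j : ℕ) (ζ : ℂ), ‖ζ‖ ≤ ρ*L^m →
      dist (F (j+1+m) ζ) (F (j+m) ζ) ≤ Dm * qq^j := by
    intro m
    obtain ⟨Am, hAm0, hAm⟩ := hlipm m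
    refine ⟨Am*D0, by positivity, fun j ζ hζ => ?_⟩
    have huζ : ‖lam ^ (-(m:ℤ)) * ζ‖ ≤ ρ := by
      rw [norm_mul, hz1 m]
      have hp : (0:ℝ) < L^m := pow_pos hL0 m
      calc (L^m)⁻¹ * ‖ζ‖ ≤ (L^m)⁻¹ * (ρ * L^m) :=
            mul_le_mul_of_nonneg_left hζ (by positivity)
        _ = ρ := by field_simp
    rw [hshift m (j+1) ζ, hshift m j ζ, Complex.dist_eq]
    calc ‖g^[m] (F (j+1) (lam^(-(m:ℤ))*ζ)) - g^[m] (F j (lam^(-(m:ℤ))*ζ))‖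
        ≤ Am * ‖F (j+1) (lam^(-(m:ℤ))*ζ) - F j (lam^(-(m:ℤ))*ζ)‖ :=
          hAm _ _ (hFmem _ _ huζ) (hFmem _ _ huζ)
      _ ≤ Am * (D0 * qq^j) := by
          apply mul_le_mul_of_nonneg_left _ hAm0
          rw [← Complex.dist_eq]
          exact hsmall j _ huζ
      _ = Am*D0*qq^j := by ring
  -- every point is eventually inside some disc
  have hex : ∀ R : ℝ, ∃ m : ℕ, R ≤ ρ*L^m := by
    intro R
    obtain ⟨m, hm⟩ := ((tendsto_pow_atTop_atTop_of_one_lt hL1).eventually_ge_atTop (R/ρ)).exists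
    refine ⟨m, ?_⟩
    have := (div_le_iff₀ hρ0).1 hm
    linarith
  -- pointwise convergence
  have hconv : ∀ ζ : ℂ, ∃ l, Tendsto (fun j => F j ζ) atTop (nhds l) := by
    intro ζ
    obtain ⟨m, hm⟩ := hex (‖ζ‖)
    obtain ⟨Dm, hDm0, hDm⟩ := hbig m
    have hc : CauchySeq (fun n => F (n+m) ζ) := by
      apply cauchySeq_of_le_geometric qq Dm hq1
      intro n
      rw [dist_comm]
      exact hDm n ζ hm
    obtain ⟨l, hl⟩ := cauchySeq_tendsto_of_complete hc
    exact ⟨l, (tendsto_add_atTop_iff_nat m).1 hl⟩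
  set φ : ℂ → ℂ := fun ζ => limUnder atTop (fun j => F j ζ) with hφdef
  have hφ : ∀ ζ, Tendsto (fun j => F j ζ) atTop (nhds (φ ζ)) := by
    intro ζ
    obtain ⟨l, hl⟩ := hconv ζ
    have h1 : φ ζ = l := hl.limUnder_eq
    rwa [h1]
  -- uniform convergence on the discs
  have hunif : ∀ m : ℕ, TendstoUniformlyOn F φ atTop (closedBall 0 (ρ*L^m)) := by
    intro m
    obtain ⟨Dm, hDm0, hDm⟩ := hbig m
    rw [Metric.tendstoUniformlyOn_iff]
    intro ε hε
    have htend : Tendsto (fun n : ℕ => Dm * qq^n / (1-qq)) atTop (nhds 0) := by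
      have h0 := tendsto_pow_atTop_nhds_zero_of_lt_one hq0 hq1
      have h1 := (h0.const_mul Dm).div_const (1-qq)
      simpa using h1
    obtain ⟨N, hN⟩ := eventually_atTop.1 (htend.eventually_lt_const hε)
    filter_upwards [eventually_ge_atTop (N+m)] with j hj
    intro ζ hζ
    have hζ' : ‖ζ‖ ≤ ρ*L^m := by
      rw [mem_closedBall, Complex.dist_eq, sub_zero] at hζ
      exact hζ
    have hu : ∀ n : ℕ, dist (F (n+m) ζ) (F (n+1+m) ζ) ≤ Dm * qq^n := by
      intro n
      rw [dist_comm]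
      exact hDm n ζ hζ'
    have hta : Tendsto (fun n => F (n+m) ζ) atTop (nhds (φ ζ)) :=
      (tendsto_add_atTop_iff_nat m).2 (hφ ζ)
    have htail := dist_le_of_le_geometric_of_tendsto qq Dm hq1 hu hta (j-m)
    rw [Nat.sub_add_cancel (le_trans (Nat.le_add_left m N) hj)] at htail
    calc dist (φ ζ) (F j ζ) = dist (F j ζ) (φ ζ) := dist_comm _ _
      _ ≤ Dm * qq^(j-m) / (1-qq) := htail
      _ < ε := hN (j-m) (by omega)
  -- locally uniform convergence
  have hTLU : TendstoLocallyUniformly F φ atTop := by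
    rw [tendstoLocallyUniformly_iff_forall_isCompact]
    intro K hK
    obtain ⟨R, hR⟩ := hK.isBounded.subset_closedBall 0
    obtain ⟨m, hm⟩ := hex R
    exact (hunif m).mono (hR.trans (Metric.closedBall_subset_closedBall hm))
  -- differentiability of each term and of the limit
  have hFdiff : ∀ j : ℕ, Differentiable ℂ (F j) := by
    intro j
    rw [hFdef]
    exact (hg.iterate j).comp ((differentiable_id.const_mul _).const_add x)
  have hφdiff : Differentiable ℂ φ := by
    have h := (tendstoLocallyUniformlyOn_univ.2 hTLU).differentiableOn
      (Eventually.of_forall fun j => (hFdiff j).differentiableOn) isOpen_univ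
    rw [← differentiableOn_univ]
    exact h
  -- value at zero
  have hφ0 : φ 0 = x := by
    have hc : ∀ j : ℕ, F j 0 = x := by
      intro j
      rw [hFdef]
      simp [Function.iterate_fixed hfix]
    exact tendsto_nhds_unique ((tendsto_congr hc).1 (hφ 0)) tendsto_const_nhds
  -- functional equation
  have hfeq : ∀ ζ : ℂ, g (φ ζ) = φ (lam * ζ) := by
    intro ζ
    have h1 : Tendsto (fun j => g (F j ζ)) atTop (nhds (g (φ ζ))) :=
      (hg.continuous.continuousAt.tendsto).comp (hφ ζ)
    have h2 : ∀ j : ℕ, g (F j ζ) = F (j+1) (lam*ζ) := by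
      intro j
      rw [hFdef]
      dsimp only
      rw [← Function.iterate_succ_apply' g j]
      have e0 : (-(((j+1):ℕ):ℤ)) = -(j:ℤ) - 1 := by push_cast; ring
      have e2 : lam ^ (-(((j+1):ℕ):ℤ)) * (lam * ζ) = lam ^ (-(j:ℤ)) * ζ := by
        rw [e0, zpow_sub₀ hlamne, zpow_one]
        field_simp
      rw [e2]
    have h3 : Tendsto (fun j => F (j+1) (lam*ζ)) atTop (nhds (φ (lam*ζ))) :=
      (tendsto_add_atTop_iff_nat 1).2 (hφ (lam*ζ))
    exact tendsto_nhds_unique h1 ((tendsto_congr h2).2 h3)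
  -- derivative at zero
  have hder : HasDerivAt φ 1 0 := by
    have hTLUd := (tendstoLocallyUniformlyOn_univ.2 hTLU).deriv
      (Eventually.of_forall fun j => (hFdiff j).differentiableOn) isOpen_univ
    have hptd : Tendsto (fun j => deriv (F j) 0) atTop (nhds (deriv φ 0)) :=
      hTLUd.tendsto_at (Set.mem_univ 0)
    have hdF : ∀ j : ℕ, deriv (F j) 0 = 1 := by
      intro j
      have hit : HasDerivAt (g^[j]) (lam ^ j) x := by
        induction j with
        | zero => simpa using hasDerivAt_id x
        | succ n ihn =>
          have h0 : HasDerivAt g lam x := by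
            have h := (hg.differentiableAt (x := x)).hasDerivAt
            rwa [← hlam] at h
          have h1 : HasDerivAt g lam (g^[n] x) := by
            rwa [Function.iterate_fixed hfix n]
          have h2 := h1.comp x ihn
          have h3 : g^[n+1] = g ∘ g^[n] := Function.iterate_succ' g n
          rw [h3, pow_succ, mul_comm (lam ^ n) lam]
          exact h2
      have hin : HasDerivAt (fun ζ : ℂ => x + lam ^ (-(j:ℤ)) * ζ) (lam ^ (-(j:ℤ))) 0 := by
        have h := ((hasDerivAt_id (0:ℂ)).const_mul (lam ^ (-(j:ℤ)))).const_add x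
        simpa using h
      have hit' : HasDerivAt (g^[j]) (lam ^ j) (x + lam ^ (-(j:ℤ)) * 0) := by
        simpa using hit
      have hcomp := hit'.comp 0 hin
      have h1 : lam ^ j * lam ^ (-(j:ℤ)) = 1 := by
        rw [← zpow_natCast lam j, ← zpow_add₀ hlamne]
        simp
      rw [h1] at hcomp
      have h2 : deriv (g^[j] ∘ fun ζ : ℂ => x + lam ^ (-(j:ℤ)) * ζ) 0 = 1 := hcomp.deriv
      rw [hFdef]
      exact h2
    have hd1 : deriv φ 0 = 1 :=
      tendsto_nhds_unique ((tendsto_congr hdF).1 hptd) tendsto_const_nhds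
    have h3 := (hφdiff 0).hasDerivAt
    rwa [hd1] at h3
  exact ⟨φ, hφdiff, hφ0, hder, hfeq, hTLU⟩
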